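/- Let α ∈ ℕ₀^n be a multi-index and D^α = ∂^{|α|}/∂x^α the corresponding differential operator. Then for every homogeneous polynomial f_m of degree m in n variables with complex coefficients, ‖D^α f_m‖_F ≤ √(m^{|α|}) ‖f_m‖_F. -/

import Mathlib

open MvPolynomial MeasureTheory Filter Matrix

noncomputable section

/-- Evaluation of a complex-coefficient polynomial at a real point of `ℝⁿ`. -/
def evalR {n : ℕ} (P : MvPolynomial (Fin n) ℂ) (x : Fin n → ℝ) : ℂ :=
  MvPolynomial.eval (fun i => (x i : ℂ)) P

/-- The real Fischer inner product `⟨f,g⟩_rF = ∫_{ℝⁿ} f(x) conj (g(x)) e^{-|x|²} dx`. -/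
def rFInner {n : ℕ} (f g : MvPolynomial (Fin n) ℂ) : ℂ :=
  ∫ x : Fin n → ℝ, evalR f x * (starRingEnd ℂ) (evalR g x) * Real.exp (-(∑ i, x i ^ 2))

/-- The real Fischer norm `‖f‖_rF = ⟨f,f⟩_rF^{1/2}`. -/
def rFNorm {n : ℕ} (f : MvPolynomial (Fin n) ℂ) : ℝ :=
  Real.sqrt (∫ x : Fin n → ℝ, ‖evalR f x‖ ^ 2 * Real.exp (-(∑ i, x i ^ 2)))

/-- The (complex) Fischer inner product `⟨f,g⟩_F = ∑_α α! c_α conj(d_α)`. -/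
def FInner {n : ℕ} (f g : MvPolynomial (Fin n) ℂ) : ℂ :=
  ∑ α ∈ f.support ∪ g.support,
    (∏ i, ((α i).factorial : ℂ)) * MvPolynomial.coeff α f *
      (starRingEnd ℂ) (MvPolynomial.coeff α g)

/-- The (complex) Fischer norm. -/
def FNorm {n : ℕ} (f : MvPolynomial (Fin n) ℂ) : ℝ :=
  Real.sqrt (FInner f f).re

/-- The Laplace operator `Δ = ∑ ∂²/∂xⱼ²` on polynomials. -/
def lapP {n : ℕ} (f : MvPolynomial (Fin n) ℂ) : MvPolynomial (Fin n) ℂ :=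
  ∑ i, MvPolynomial.pderiv i (MvPolynomial.pderiv i f)

/-- The differential operator `D^α = ∂^{|α|}/∂x^α` on polynomials. -/
def DP {n : ℕ} (α : Fin n → ℕ) (f : MvPolynomial (Fin n) ℂ) : MvPolynomial (Fin n) ℂ :=
  (List.finRange n).foldl (fun g i => (fun h => MvPolynomial.pderiv i h)^[α i] g) f

/-- The constant coefficient operator `Q(D)` associated to a polynomial `Q = ∑ c_β x^β`. -/
def QD {n : ℕ} (Q f : MvPolynomial (Fin n) ℂ) : MvPolynomial (Fin n) ℂ :=
  ∑ β ∈ Q.support, MvPolynomial.coeff β Q • DP (fun i => β i) f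

/-- The polynomial `|x|² = x₁² + ⋯ + xₙ²`. -/
def radSq (n : ℕ) : MvPolynomial (Fin n) ℂ :=
  ∑ i : Fin n, (MvPolynomial.X i) ^ 2

/-- `Ii m = ∫₀^∞ e^{-r²} r^m dr`. -/
def Ii (m : ℕ) : ℝ := ∫ r in Set.Ioi (0 : ℝ), Real.exp (-r ^ 2) * r ^ m

/-- `e_{p,m} = 2^p p! (2m+n)(2m+n+2)⋯(2m+n+2(p-1))` (for `n` variables). -/
def epm (n p m : ℕ) : ℕ :=
  2 ^ p * Nat.factorial p * ∏ i ∈ Finset.range p, (2 * m + n + 2 * i)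

/-- The partial derivative `∂/∂xᵢ` of a function on `ℝⁿ`. -/
def pdF {n : ℕ} (i : Fin n) (f : (Fin n → ℝ) → ℂ) : (Fin n → ℝ) → ℂ :=
  fun x => fderiv ℝ f x (Pi.single i 1)

/-- The differential operator `D^α` on functions on `ℝⁿ`. -/
def DF {n : ℕ} (α : Fin n → ℕ) (f : (Fin n → ℝ) → ℂ) : (Fin n → ℝ) → ℂ :=
  (List.finRange n).foldl (fun g i => (pdF i)^[α i] g) f

/-- The Laplace operator `Δ` on functions on `ℝⁿ`. -/
def lapF {n : ℕ} (f : (Fin n → ℝ) → ℂ) : (Fin n → ℝ) → ℂ :=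
  fun x => ∑ i, pdF i (pdF i f) x

/-- The open euclidean ball `B_R = {x ∈ ℝⁿ : |x| < R}`. -/
def euclBall (n : ℕ) (R : ℝ) : Set (Fin n → ℝ) := {x | ∑ i, x i ^ 2 < R ^ 2}

/-- The homogeneous part of degree `m` of the Taylor series of `f` at `0`:
`f_m(x) = ∑_{|α|=m} (1/α!) (∂^α f)(0) x^α`. -/
def homPart {n : ℕ} (f : (Fin n → ℝ) → ℂ) (m : ℕ) (x : Fin n → ℝ) : ℂ :=
  ∑ α ∈ Finset.Nat.antidiagonalTuple n m,
    (∏ i, ((α i).factorial : ℂ))⁻¹ * DF α f 0 * ∏ i, (x i : ℂ) ^ (α i)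

/-- Membership in `A(B_R)`: infinitely differentiable on `B_R`, and the homogeneous Taylor
series converges absolutely and uniformly to `f` on every compact subset of `B_R`. -/
def MemA (n : ℕ) (R : ℝ) (f : (Fin n → ℝ) → ℂ) : Prop :=
  ContDiffOn ℝ ⊤ f (euclBall n R) ∧
  ∀ K : Set (Fin n → ℝ), K ⊆ euclBall n R → IsCompact K →
    TendstoUniformlyOn (fun N x => ∑ m ∈ Finset.range N, homPart f m x) f atTop K ∧
    ∃ g : (Fin n → ℝ) → ℝ,
      TendstoUniformlyOn (fun N x => ∑ m ∈ Finset.range N, ‖homPart f m x‖)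
        g atTop K

/-- The operator `Q(D)` on functions on `ℝⁿ`. -/
def QDF {n : ℕ} (Q : MvPolynomial (Fin n) ℂ) (u : (Fin n → ℝ) → ℂ) : (Fin n → ℝ) → ℂ :=
  fun x => ∑ β ∈ Q.support, MvPolynomial.coeff β Q * DF (fun i => β i) u x

/-- The operator `L = Δ^p + ∑_{|α| ≤ k₀} a_α(x) D^α` on functions on `ℝⁿ`. -/
def Lop {n : ℕ} (p k₀ : ℕ) (a : (Fin n → ℕ) → (Fin n → ℝ) → ℂ)
    (u : (Fin n → ℝ) → ℂ) : (Fin n → ℝ) → ℂ :=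
  fun x => (lapF^[p] u) x +
    ∑ l ∈ Finset.range (k₀ + 1), ∑ α ∈ Finset.Nat.antidiagonalTuple n l, a α x * DF α u x

/-- The operator `L = Q(D) + ∑_{|α| ≤ k₀} a_α(x) D^α` on functions on `ℝⁿ`. -/
def LopQ {n : ℕ} (Q : MvPolynomial (Fin n) ℂ) (k₀ : ℕ) (a : (Fin n → ℕ) → (Fin n → ℝ) → ℂ)
    (u : (Fin n → ℝ) → ℂ) : (Fin n → ℝ) → ℂ :=
  fun x => QDF Q u x +
    ∑ l ∈ Finset.range (k₀ + 1), ∑ α ∈ Finset.Nat.antidiagonalTuple n l, a α x * DF α u x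

/-- The complex partial derivative `∂/∂zᵢ` of a function on `ℂⁿ`. -/
def pdC {n : ℕ} (i : Fin n) (f : (Fin n → ℂ) → ℂ) : (Fin n → ℂ) → ℂ :=
  fun z => fderiv ℂ f z (Pi.single i 1)

/-- The differential operator `D^α` on functions on `ℂⁿ`. -/
def DFc {n : ℕ} (α : Fin n → ℕ) (f : (Fin n → ℂ) → ℂ) : (Fin n → ℂ) → ℂ :=
  (List.finRange n).foldl (fun g i => (pdC i)^[α i] g) f

/-- The operator `B(D) = ∑_{i,j} B_{ij} ∂_i ∂_j` on functions on `ℂⁿ`, for the quadratic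
form `B(ζ) = ζᵗBζ`. -/
def BDop {n : ℕ} (B : Matrix (Fin n) (Fin n) ℂ) (f : (Fin n → ℂ) → ℂ) :
    (Fin n → ℂ) → ℂ :=
  fun z => ∑ i, ∑ j, B i j * pdC i (pdC j f) z

/-- The operator `L = (B(D))^p + ∑_{|α| ≤ p} a_α(z) D^α` on functions on `ℂⁿ`. -/
def LC {n : ℕ} (B : Matrix (Fin n) (Fin n) ℂ) (p : ℕ)
    (a : (Fin n → ℕ) → (Fin n → ℂ) → ℂ) (u : (Fin n → ℂ) → ℂ) : (Fin n → ℂ) → ℂ :=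
  fun z => ((BDop B)^[p] u) z +
    ∑ l ∈ Finset.range (p + 1), ∑ α ∈ Finset.Nat.antidiagonalTuple n l, a α z * DFc α u z

end


section Aux

open MvPolynomial Complex

variable {n : ℕ}

private lemma coeff_pderiv' (i : Fin n) (f : MvPolynomial (Fin n) ℂ) (β : (Fin n) →₀ ℕ) :
    MvPolynomial.coeff β (MvPolynomial.pderiv i f)
      = ((β i : ℂ) + 1) * MvPolynomial.coeff (β + Finsupp.single i 1) f := by
  induction f using MvPolynomial.induction_on' with
  | add p q hp hq => simp [hp, hq, mul_add]
  | monomial u a =>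
    rw [MvPolynomial.pderiv_monomial, MvPolynomial.coeff_monomial, MvPolynomial.coeff_monomial]
    by_cases h : u = β + Finsupp.single i 1
    · subst h
      rw [if_pos (add_tsub_cancel_right _ _), if_pos rfl]
      simp only [Finsupp.add_apply, Finsupp.single_eq_same]
      push_cast
      ring
    · rw [if_neg h, mul_zero]
      by_cases h2 : u - Finsupp.single i 1 = β
      · rw [if_pos h2]
        by_cases h3 : u i = 0
        · simp [h3]
        · exfalso
          apply h
          ext j
          have hβj : β j = u j - Finsupp.single i 1 j := by
            rw [← h2, Finsupp.tsub_apply]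
          rcases eq_or_ne j i with rfl | hj
          · rw [Finsupp.add_apply, Finsupp.single_eq_same] at *
            omega
          · rw [Finsupp.single_eq_of_ne hj] at hβj
            rw [Finsupp.add_apply, Finsupp.single_eq_of_ne hj]
            omega
      · rw [if_neg h2]

/-- The summand of the Fischer pairing of `g` with itself. -/
private noncomputable def fterm (g : MvPolynomial (Fin n) ℂ) (β : (Fin n) →₀ ℕ) : ℝ :=
  (∏ j, ((β j).factorial : ℝ)) * Complex.normSq (MvPolynomial.coeff β g)

private lemma fterm_nonneg (g : MvPolynomial (Fin n) ℂ) (β : (Fin n) →₀ ℕ) :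
    0 ≤ fterm g β := by
  apply mul_nonneg _ (Complex.normSq_nonneg _)
  exact Finset.prod_nonneg fun j _ => by positivity

/-- The Fischer pairing of `g` with itself as a real sum. -/
private noncomputable def Sval (g : MvPolynomial (Fin n) ℂ) : ℝ :=
  ∑ β ∈ g.support, fterm g β

private lemma Sval_nonneg (g : MvPolynomial (Fin n) ℂ) : 0 ≤ Sval g :=
  Finset.sum_nonneg fun β _ => fterm_nonneg g β

private lemma FInner_self_re (g : MvPolynomial (Fin n) ℂ) : (FInner g g).re = Sval g := by
  rw [FInner, Finset.union_self, Complex.re_sum]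
  refine Finset.sum_congr rfl fun β _ => ?_
  rw [mul_assoc, Complex.mul_conj, ← Nat.cast_prod, ← Complex.ofReal_natCast,
    ← Complex.ofReal_mul, Complex.ofReal_re, fterm, Nat.cast_prod]

private lemma Sval_eq_sum_superset {g : MvPolynomial (Fin n) ℂ} {s : Finset ((Fin n) →₀ ℕ)}
    (hs : g.support ⊆ s) : Sval g = ∑ β ∈ s, fterm g β := by
  refine Finset.sum_subset hs fun β _ hβ => ?_
  simp [fterm, MvPolynomial.notMem_support_iff.mp hβ]

private lemma degree_add_single (γ : (Fin n) →₀ ℕ) (i : Fin n) :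
    (γ + Finsupp.single i 1).degree = γ.degree + 1 := by
  simp only [Finsupp.degree_eq_weight_one, map_add]
  congr 1
  simp [Finsupp.weight_apply, Finsupp.sum_single_index]

private lemma hom_pderiv {k : ℕ} (i : Fin n) {f : MvPolynomial (Fin n) ℂ}
    (hf : f.IsHomogeneous k) : (MvPolynomial.pderiv i f).IsHomogeneous (k - 1) := by
  intro d hd
  rw [coeff_pderiv'] at hd
  have h2 : MvPolynomial.coeff (d + Finsupp.single i 1) f ≠ 0 := fun h => hd (by rw [h, mul_zero])
  have h3 : (d + Finsupp.single i 1).degree = k := by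
    rw [Finsupp.degree_eq_weight_one]
    exact hf h2
  rw [degree_add_single] at h3
  rw [show ((Finsupp.weight 1) d : ℕ) = d.degree by rw [Finsupp.degree_eq_weight_one]; rfl]
  omega

private lemma Sval_pderiv_le {m k : ℕ} (i : Fin n) (f : MvPolynomial (Fin n) ℂ)
    (hf : f.IsHomogeneous k) (hk : k ≤ m) :
    Sval (MvPolynomial.pderiv i f) ≤ (m : ℝ) * Sval f := by
  classical
  set e : (Fin n) →₀ ℕ := Finsupp.single i 1 with he
  have hsub : (MvPolynomial.pderiv i f).support ⊆ f.support.image (fun γ => γ - e) := by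
    intro β hβ
    rw [MvPolynomial.mem_support_iff, coeff_pderiv'] at hβ
    have h2 : MvPolynomial.coeff (β + e) f ≠ 0 := fun h => hβ (by rw [h, mul_zero])
    exact Finset.mem_image.mpr ⟨β + e, MvPolynomial.mem_support_iff.mpr h2,
      add_tsub_cancel_right _ _⟩
  have himg : ∑ β ∈ f.support.image (fun γ => γ - e), fterm (MvPolynomial.pderiv i f) β
      ≤ ∑ γ ∈ f.support, fterm (MvPolynomial.pderiv i f) (γ - e) := by
    rw [Finset.sum_comp (fterm (MvPolynomial.pderiv i f)) (fun γ => γ - e)]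
    refine Finset.sum_le_sum fun β hβ => ?_
    have hne : (f.support.filter (fun γ => γ - e = β)).Nonempty := by
      obtain ⟨γ, hγ, hγβ⟩ := Finset.mem_image.mp hβ
      exact ⟨γ, Finset.mem_filter.mpr ⟨hγ, hγβ⟩⟩
    have hcard : 1 ≤ (f.support.filter (fun γ => γ - e = β)).card :=
      Finset.card_pos.mpr hne
    rw [nsmul_eq_mul]
    nlinarith [fterm_nonneg (MvPolynomial.pderiv i f) β,
      (Nat.one_le_cast.mpr hcard : (1:ℝ) ≤ (f.support.filter (fun γ => γ - e = β)).card)]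
  have hpt : ∀ γ ∈ f.support, fterm (MvPolynomial.pderiv i f) (γ - e) ≤ (m:ℝ) * fterm f γ := by
    intro γ hγ
    have hcγ := MvPolynomial.mem_support_iff.mp hγ
    have hdeg : γ.degree = k := by
      rw [Finsupp.degree_eq_weight_one]
      exact hf hcγ
    by_cases hγi : γ i = 0
    · have h1 : γ - e = γ := by
        ext j
        rw [Finsupp.tsub_apply]
        rcases eq_or_ne j i with rfl | hj
        · rw [he, Finsupp.single_eq_same]; omega
        · rw [he, Finsupp.single_eq_of_ne hj]; omega
      have h2 : MvPolynomial.coeff (γ + e) f = 0 := by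
        apply hf.coeff_eq_zero
        rw [he, degree_add_single, hdeg]
        omega
      have h3 : fterm (MvPolynomial.pderiv i f) (γ - e) = 0 := by
        rw [h1, fterm, coeff_pderiv', ← he, h2, mul_zero]
        simp
      rw [h3]
      exact mul_nonneg (by positivity) (fterm_nonneg f γ)
    · have h1 : (γ - e) + e = γ := by
        ext j
        rw [Finsupp.add_apply, Finsupp.tsub_apply]
        rcases eq_or_ne j i with rfl | hj
        · rw [he, Finsupp.single_eq_same]; omega
        · rw [he, Finsupp.single_eq_of_ne hj]; omega
      have hdi : (γ - e) i = γ i - 1 := by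
        rw [Finsupp.tsub_apply, he, Finsupp.single_eq_same]
      have hcast : (((γ - e) i : ℂ) + 1) = ((γ i : ℕ) : ℂ) := by
        rw [hdi]
        rw [show ((γ i - 1 : ℕ) : ℂ) + 1 = (((γ i - 1) + 1 : ℕ) : ℂ) by push_cast; ring]
        congr 1
        omega
      have hcoeff : MvPolynomial.coeff (γ - e) (MvPolynomial.pderiv i f)
          = ((γ i : ℕ) : ℂ) * MvPolynomial.coeff γ f := by
        rw [coeff_pderiv', ← he, h1, hcast]
      have hprod : (∏ j, ((γ - e) j).factorial) * (γ i) = ∏ j, (γ j).factorial := by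
        rw [Fintype.prod_eq_mul_prod_compl i (fun j => ((γ - e) j).factorial),
          Fintype.prod_eq_mul_prod_compl i (fun j => (γ j).factorial)]
        have hoff : ∏ j ∈ {i}ᶜ, ((γ - e) j).factorial = ∏ j ∈ {i}ᶜ, (γ j).factorial := by
          refine Finset.prod_congr rfl fun j hj => ?_
          have hj' : j ≠ i := by simpa using hj
          rw [Finsupp.tsub_apply, he, Finsupp.single_eq_of_ne hj']
          simp
        rw [hoff, hdi]
        have hfac : (γ i - 1).factorial * γ i = (γ i).factorial := by
          conv_rhs => rw [show γ i = (γ i - 1) + 1 by omega]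
          rw [Nat.factorial_succ]
          have : γ i - 1 + 1 = γ i := by omega
          rw [this]
          ring
        rw [← hfac]
        ring
    -- fterm (pderiv i f) (γ - e) = (γ i) * fterm f γ
      have heq : fterm (MvPolynomial.pderiv i f) (γ - e) = (γ i : ℝ) * fterm f γ := by
        rw [fterm, fterm, hcoeff, Complex.normSq_mul, Complex.normSq_natCast]
        have hcR : (∏ j, (((γ - e) j).factorial : ℝ)) * (γ i : ℝ) = ∏ j, ((γ j).factorial : ℝ) := by
          rw [show (∏ j, (((γ - e) j).factorial : ℝ)) = (((∏ j, ((γ - e) j).factorial : ℕ)) : ℝ) by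
            push_cast; rfl]
          rw [show (∏ j, (((γ j).factorial : ℝ))) = (((∏ j, (γ j).factorial : ℕ)) : ℝ) by
            push_cast; rfl]
          rw [← hprod]
          push_cast
          ring
        rw [← hcR]
        ring
      rw [heq]
      have hle : (γ i : ℝ) ≤ (m : ℝ) := by
        have := Finsupp.le_degree i γ
        rw [hdeg] at this
        exact_mod_cast le_trans this hk
      exact mul_le_mul_of_nonneg_right hle (fterm_nonneg f γ)
  calc Sval (MvPolynomial.pderiv i f)
      = ∑ β ∈ f.support.image (fun γ => γ - e), fterm (MvPolynomial.pderiv i f) β :=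
        Sval_eq_sum_superset hsub
    _ ≤ ∑ γ ∈ f.support, fterm (MvPolynomial.pderiv i f) (γ - e) := himg
    _ ≤ ∑ γ ∈ f.support, (m : ℝ) * fterm f γ := Finset.sum_le_sum hpt
    _ = (m : ℝ) * Sval f := by rw [← Finset.mul_sum]; rfl

private lemma Sval_iter (m : ℕ) (i : Fin n) (p : ℕ) :
    ∀ (f : MvPolynomial (Fin n) ℂ) (k : ℕ), k ≤ m → f.IsHomogeneous k →
      (∃ k' ≤ m, ((fun h => MvPolynomial.pderiv i h)^[p] f).IsHomogeneous k') ∧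
        Sval ((fun h => MvPolynomial.pderiv i h)^[p] f) ≤ (m:ℝ)^p * Sval f := by
  induction p with
  | zero =>
    intro f k hk hf
    refine ⟨⟨k, hk, hf⟩, ?_⟩
    simp
  | succ p ih =>
    intro f k hk hf
    rw [Function.iterate_succ_apply]
    have hd : (MvPolynomial.pderiv i f).IsHomogeneous (k - 1) := hom_pderiv i hf
    obtain ⟨hhom, hS⟩ := ih (MvPolynomial.pderiv i f) (k-1) (le_trans (Nat.sub_le _ _) hk) hd
    refine ⟨hhom, ?_⟩
    calc Sval ((fun h => MvPolynomial.pderiv i h)^[p] (MvPolynomial.pderiv i f))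
        ≤ (m:ℝ)^p * Sval (MvPolynomial.pderiv i f) := hS
      _ ≤ (m:ℝ)^p * ((m:ℝ) * Sval f) := by
          exact mul_le_mul_of_nonneg_left (Sval_pderiv_le i f hf hk) (by positivity)
      _ = (m:ℝ)^(p+1) * Sval f := by ring

private lemma Sval_foldl (m : ℕ) (α : Fin n → ℕ) :
    ∀ (L : List (Fin n)) (f : MvPolynomial (Fin n) ℂ) (k : ℕ), k ≤ m → f.IsHomogeneous k →
      Sval (L.foldl (fun g i => (fun h => MvPolynomial.pderiv i h)^[α i] g) f)
        ≤ (m:ℝ)^((L.map α).sum) * Sval f := by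
  intro L
  induction L with
  | nil => intro f k hk hf; simp
  | cons i L ih =>
    intro f k hk hf
    simp only [List.foldl_cons, List.map_cons, List.sum_cons]
    obtain ⟨⟨k', hk', hhom⟩, hS⟩ := Sval_iter m i (α i) f k hk hf
    calc Sval (L.foldl (fun g i => (fun h => MvPolynomial.pderiv i h)^[α i] g)
          ((fun h => MvPolynomial.pderiv i h)^[α i] f))
        ≤ (m:ℝ)^((L.map α).sum) * Sval ((fun h => MvPolynomial.pderiv i h)^[α i] f) :=
          ih _ k' hk' hhom
      _ ≤ (m:ℝ)^((L.map α).sum) * ((m:ℝ)^(α i) * Sval f) :=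
          mul_le_mul_of_nonneg_left hS (by positivity)
      _ = (m:ℝ)^(α i + (L.map α).sum) * Sval f := by rw [pow_add]; ring

end Aux

/-- Proposition `PropDeriv`, complex Fischer norm:
`‖D^α f_m‖_F ≤ √(m^{|α|}) ‖f_m‖_F` for homogeneous `f_m` of degree `m`. -/
theorem stmt_8 (n m : ℕ) (α : Fin n → ℕ) (f : MvPolynomial (Fin n) ℂ)
    (hf : f.IsHomogeneous m) :
    FNorm (DP α f) ≤ Real.sqrt ((m : ℝ) ^ (∑ i, α i)) * FNorm f := by
  have key := Sval_foldl m α (List.finRange n) f m le_rfl hf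
  have hsum : ((List.finRange n).map α).sum = ∑ i, α i := by
    rw [Fin.sum_univ_def]
  rw [hsum] at key
  rw [FNorm, FNorm, FInner_self_re, FInner_self_re, ← Real.sqrt_mul (by positivity)]
  apply Real.sqrt_le_sqrt
  rw [DP]
  exact key
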